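/- Let $\mathcal{L}$ be a finite-dimensional Hilbert space with orthonormal computational basis $\{|l\rangle\}$, let $\hat{\mathcal{Z}}$ be a Hilbert space, and let $0\le\delta\le 1$. For a fixed basis vector $|l_x\rangle$ of a copy $\mathcal{L}^X$ of $\mathcal{L}$ and a unit vector $|h\rangle\in\hat{\mathcal{Z}}$, define $N_{X;l_x,\delta}(|h\rangle\langle h|) := \frac{|\mathcal{L}|^{-1}}{1+2\delta^2}\sum_{l_y}\big(\delta(|h\rangle + \delta|h\rangle|l_x\rangle)\langle h|\langle l_y| + \delta|h\rangle|l_y\rangle(\langle h| + \delta\langle h|\langle l_x|) + \delta^2 |h\rangle\langle h|\otimes|l_y\rangle\langle l_y|\big)$, where $l_y$ ranges over all $|\mathcal{L}|$ computational basis vectors of a copy $\mathcal{L}^Y$ of $\mathcal{L}$ orthogonal to $\mathcal{L}^X$. Then $\|N_{X;l_x,\delta}(|h\rangle\langle h|)\|_{\infty} \le \frac{3\delta}{\sqrt{|\mathcal{L}|}}$. -/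

import Mathlib

open Matrix Finset

/-- The extended space `Z' = Ẑ ⊕ (Ẑ⊗L^X) ⊕ (Ẑ⊗L^Y)` (index type). -/
abbrev Zext (z m : ℕ) : Type := Fin z ⊕ ((Fin z × Fin m) ⊕ (Fin z × Fin m))

/-- `h` viewed in the first summand `Ẑ` of `Z'`. -/
def e0 {z m : ℕ} (h : Fin z → ℂ) : Zext z m → ℂ :=
  Sum.elim h (Sum.elim 0 0)

/-- `h ⊗ |l_x⟩` in the summand `Ẑ⊗L^X` of `Z'`. -/
def eX {z m : ℕ} (h : Fin z → ℂ) (lx : Fin m) : Zext z m → ℂ :=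
  Sum.elim 0 (Sum.elim (fun p => h p.1 * (if p.2 = lx then 1 else 0)) 0)

/-- `h ⊗ |l_y⟩` in the summand `Ẑ⊗L^Y` of `Z'`. -/
def eY {z m : ℕ} (h : Fin z → ℂ) (ly : Fin m) : Zext z m → ℂ :=
  Sum.elim 0 (Sum.elim 0 (fun p => h p.1 * (if p.2 = ly then 1 else 0)))

/-- Rank-one operator `|u⟩⟨v|`. -/
noncomputable def outer {ι : Type*} (u v : ι → ℂ) : Matrix ι ι ℂ :=
  fun p q => u p * star (v q)

lemma sum_mulVec' {ι κ : Type*} [Fintype ι] [Fintype κ] (A : κ → Matrix ι ι ℂ) (v : ι → ℂ) :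
    (∑ k, A k).mulVec v = ∑ k, (A k).mulVec v := by
  funext p
  simp only [Matrix.mulVec, dotProduct, Matrix.sum_apply, Finset.sum_apply,
    Finset.sum_mul]
  rw [Finset.sum_comm]

lemma outer_mulVec {ι : Type*} [Fintype ι] (a b v : ι → ℂ) :
    (outer a b).mulVec v = (∑ q, star (b q) * v q) • a := by
  funext p
  simp only [outer, Matrix.mulVec, dotProduct, Pi.smul_apply, smul_eq_mul,
    Finset.sum_mul]
  exact Finset.sum_congr rfl fun q _ => by ring

lemma cs' {ι : Type*} [Fintype ι] (x y : ι → ℂ) :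
    ‖∑ i, star (x i) * y i‖ ≤ Real.sqrt (∑ i, ‖x i‖^2) * Real.sqrt (∑ i, ‖y i‖^2) := by
  have := norm_inner_le_norm (𝕜 := ℂ) (E := EuclideanSpace ℂ ι)
      ((WithLp.equiv 2 _).symm x) ((WithLp.equiv 2 _).symm y)
  simpa [EuclideanSpace.norm_eq, PiLp.inner_apply, RCLike.inner_apply, Complex.star_def, mul_comm]
    using this

set_option maxHeartbeats 4000000 in
theorem stmt16 {z m : ℕ} (δ : ℝ) (hδ0 : 0 ≤ δ) (hδ1 : δ ≤ 1)
    (h : Fin z → ℂ) (hh : ∑ i, ‖h i‖ ^ 2 = 1) (lx : Fin m)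
    (N : Matrix (Zext z m) (Zext z m) ℂ)
    (hN : N = (((m : ℂ))⁻¹ * ((1 : ℂ) + 2 * (δ : ℂ) ^ 2)⁻¹) •
      ∑ ly : Fin m,
        ((δ : ℂ) • outer (fun p => e0 h p + (δ : ℂ) * eX h lx p) (eY h ly)
          + (δ : ℂ) • outer (eY h ly) (fun p => e0 h p + (δ : ℂ) * eX h lx p)
          + ((δ : ℂ) ^ 2) • outer (eY h ly) (eY h ly))) :
    ∀ v : Zext z m → ℂ,
      Real.sqrt (∑ p, ‖N.mulVec v p‖ ^ 2) ≤
        3 * δ / Real.sqrt m * Real.sqrt (∑ p, ‖v p‖ ^ 2) := by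
  intro v
  classical
  have hm : 0 < m := lx.pos
  have hm1 : (1:ℝ) ≤ (m:ℝ) := by exact_mod_cast hm
  set u : Zext z m → ℂ := fun p => e0 h p + (δ:ℂ) * eX h lx p with hu_def
  set cc : ℂ := ((m : ℂ))⁻¹ * ((1 : ℂ) + 2 * (δ : ℂ) ^ 2)⁻¹ with hcc_def
  set γ : Fin m → ℂ := fun ly => ∑ q, star (eY h ly q) * v q with hγ_def
  set β : ℂ := ∑ q, star (u q) * v q with hβ_def
  set α : ℂ := ∑ ly, γ ly with hα_def
  set s : Zext z m → ℂ := ∑ ly, eY h ly with hs_def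
  set T : Zext z m → ℂ := ∑ ly, γ ly • eY h ly with hT_def
  -- Step 1: the action of N on v
  have hmulvec : N.mulVec v
      = cc • ((δ:ℂ) • (α • u) + (δ:ℂ) • (β • s) + ((δ:ℂ)^2) • T) := by
    subst hN
    rw [Matrix.smul_mulVec, sum_mulVec']
    congr 1
    have hterm : ∀ ly : Fin m,
        ((δ:ℂ) • outer u (eY h ly) + (δ:ℂ) • outer (eY h ly) u
          + ((δ:ℂ)^2) • outer (eY h ly) (eY h ly)).mulVec v
        = (δ:ℂ) • (γ ly • u) + (δ:ℂ) • (β • eY h ly) + ((δ:ℂ)^2) • (γ ly • eY h ly) := by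
      intro ly
      rw [Matrix.add_mulVec, Matrix.add_mulVec, Matrix.smul_mulVec,
        Matrix.smul_mulVec, Matrix.smul_mulVec, outer_mulVec, outer_mulVec,
        outer_mulVec]
    rw [Finset.sum_congr rfl fun ly _ => hterm ly]
    rw [Finset.sum_add_distrib, Finset.sum_add_distrib, ← Finset.smul_sum, ← Finset.smul_sum,
      ← Finset.smul_sum, ← Finset.sum_smul, ← Finset.smul_sum, hT_def, hs_def, hα_def]
  set b : ℝ := Real.sqrt (∑ p, ‖v p‖ ^ 2) with hb_def
  have hb0 : 0 ≤ b := Real.sqrt_nonneg _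
  -- ‖u‖² = 1 + δ²
  have hU2 : (∑ p, ‖u p‖ ^ 2) = 1 + δ ^ 2 := by
    rw [Fintype.sum_sum_type, Fintype.sum_sum_type]
    have h1 : ∀ i : Fin z, ‖u (Sum.inl i)‖ ^ 2 = ‖h i‖ ^ 2 := by
      intro i; simp [hu_def, e0, eX]
    have h2 : ∀ p : Fin z × Fin m, ‖u (Sum.inr (Sum.inl p))‖ ^ 2
        = δ ^ 2 * (if p.2 = lx then ‖h p.1‖ ^ 2 else 0) := by
      intro p
      by_cases hp : p.2 = lx <;>
        simp [hu_def, e0, eX, hp, norm_mul, mul_pow, Complex.sq_norm, sq_abs]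
    have h3 : ∀ p : Fin z × Fin m, ‖u (Sum.inr (Sum.inr p))‖ ^ 2 = 0 := by
      intro p; simp [hu_def, e0, eX]
    rw [Finset.sum_congr rfl fun i _ => h1 i, Finset.sum_congr rfl fun p _ => h2 p,
      Finset.sum_congr rfl fun p _ => h3 p, hh, Finset.sum_const_zero, add_zero,
      Fintype.sum_prod_type]
    have h4 : ∀ i : Fin z, ∑ l : Fin m, δ ^ 2 * (if l = lx then ‖h i‖ ^ 2 else 0)
        = δ ^ 2 * ‖h i‖ ^ 2 := by
      intro i; rw [← Finset.mul_sum, Finset.sum_ite_eq' Finset.univ lx]; simp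
    rw [Finset.sum_congr rfl fun i _ => h4 i, ← Finset.mul_sum, hh, mul_one]
  -- ‖s‖² = m
  have hsp : ∀ p, s p = Sum.elim (0 : Fin z → ℂ) (Sum.elim (0 : Fin z × Fin m → ℂ) (fun p : Fin z × Fin m => h p.1)) p := by
    intro p
    rw [hs_def, Finset.sum_apply]
    rcases p with i | (p | p)
    · simp [eY]
    · simp [eY]
    · simp [eY, mul_ite, mul_one, mul_zero, Finset.sum_ite_eq]
  have hS2 : (∑ p, ‖s p‖ ^ 2) = (m : ℝ) := by
    rw [Finset.sum_congr rfl fun p _ => by rw [hsp p]]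
    rw [Fintype.sum_sum_type, Fintype.sum_sum_type, Fintype.sum_prod_type]
    simp only [Sum.elim_inl, Sum.elim_inr, Pi.zero_apply, norm_zero, zero_pow,
      Finset.sum_const_zero, zero_add, ne_eq, OfNat.ofNat_ne_zero, not_false_iff]
    rw [Fintype.sum_prod_type_right]
    have hh' : ∑ i : Fin z, ‖h i‖ ^ 2 = 1 := by
      simpa using hh
    simp [hh']
  -- ‖T‖² = ∑ ‖γ‖²
  have hTp : ∀ p, T p
      = Sum.elim (0 : Fin z → ℂ) (Sum.elim (0 : Fin z × Fin m → ℂ) (fun p : Fin z × Fin m => γ p.2 * h p.1)) p := by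
    intro p
    rw [hT_def, Finset.sum_apply]
    rcases p with i | (p | p)
    · simp [eY]
    · simp [eY]
    · simp [eY, mul_ite, mul_one, mul_zero, Finset.sum_ite_eq]
  have hT2 : (∑ p, ‖T p‖ ^ 2) = ∑ l, ‖γ l‖ ^ 2 := by
    rw [Finset.sum_congr rfl fun p _ => by rw [hTp p]]
    rw [Fintype.sum_sum_type, Fintype.sum_sum_type, Fintype.sum_prod_type]
    simp only [Sum.elim_inl, Sum.elim_inr, Pi.zero_apply, norm_zero, zero_pow,
      Finset.sum_const_zero, zero_add, ne_eq, OfNat.ofNat_ne_zero, not_false_iff,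
      norm_mul, mul_pow]
    rw [Fintype.sum_prod_type_right]
    refine Finset.sum_congr rfl fun l _ => ?_
    calc ∑ x : Fin z, ‖γ (x, l).2‖ ^ 2 * ‖h (x, l).1‖ ^ 2
        = ∑ x : Fin z, ‖γ l‖ ^ 2 * ‖h x‖ ^ 2 := rfl
      _ = ‖γ l‖ ^ 2 := by rw [← Finset.mul_sum, hh, mul_one]
  -- γ in explicit form
  have hγ_eq : ∀ l, γ l = ∑ i, star (h i) * v (Sum.inr (Sum.inr (i, l))) := by
    intro l
    simp only [hγ_def]
    rw [Fintype.sum_sum_type, Fintype.sum_sum_type]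
    simp only [eY, Sum.elim_inl, Sum.elim_inr, Pi.zero_apply, star_zero, zero_mul,
      Finset.sum_const_zero, zero_add]
    have e : ∀ y : Fin m,
        (∑ i : Fin z, star (h (i, y).1 * (if (i, y).2 = l then (1:ℂ) else 0))
            * v (Sum.inr (Sum.inr (i, y))))
        = if y = l then ∑ i : Fin z, star (h i) * v (Sum.inr (Sum.inr (i, l))) else 0 := by
      intro y
      by_cases hy : y = l
      · subst hy; simp
      · simp [hy]
    rw [Fintype.sum_prod_type_right, Finset.sum_congr rfl fun y _ => e y,
      Finset.sum_ite_eq' Finset.univ l]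
    simp
  -- α in explicit form
  have hα_eq : α = ∑ q, star (s q) * v q := by
    rw [hα_def]
    simp only [hγ_def]
    rw [Finset.sum_comm]
    refine Finset.sum_congr rfl fun q _ => ?_
    rw [hsp q]
    rcases q with i | (p | p)
    · simp [eY]
    · simp [eY]
    · rw [← Finset.sum_mul]
      have e : ∑ ly : Fin m, star (eY h ly (Sum.inr (Sum.inr p))) = star (h p.1) := by
        calc ∑ ly : Fin m, star (eY h ly (Sum.inr (Sum.inr p)))
            = ∑ ly : Fin m, (if p.2 = ly then star (h p.1) else 0) := by
              refine Finset.sum_congr rfl fun ly _ => ?_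
              by_cases hy : p.2 = ly <;> simp [eY, hy]
          _ = star (h p.1) := by rw [Finset.sum_ite_eq]; simp
      rw [e]
      simp
  -- Cauchy–Schwarz bounds
  have hαb : ‖α‖ ≤ Real.sqrt m * b := by
    rw [hα_eq]
    calc ‖∑ q, star (s q) * v q‖
        ≤ Real.sqrt (∑ q, ‖s q‖ ^ 2) * b := cs' s v
      _ = Real.sqrt m * b := by rw [hS2]
  have hβb : ‖β‖ ≤ Real.sqrt (1 + δ ^ 2) * b := by
    rw [hβ_def]
    calc ‖∑ q, star (u q) * v q‖
        ≤ Real.sqrt (∑ q, ‖u q‖ ^ 2) * b := cs' u v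
      _ = Real.sqrt (1 + δ ^ 2) * b := by rw [hU2]
  have hγb : ∀ l, ‖γ l‖ ^ 2 ≤ ∑ i, ‖v (Sum.inr (Sum.inr (i, l)))‖ ^ 2 := by
    intro l
    have h1 := cs' h (fun i => v (Sum.inr (Sum.inr (i, l))))
    rw [hh, Real.sqrt_one, one_mul, ← hγ_eq l] at h1
    calc ‖γ l‖ ^ 2 ≤ (Real.sqrt (∑ i, ‖v (Sum.inr (Sum.inr (i, l)))‖ ^ 2)) ^ 2 :=
          pow_le_pow_left₀ (norm_nonneg _) h1 2
      _ = ∑ i, ‖v (Sum.inr (Sum.inr (i, l)))‖ ^ 2 :=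
          Real.sq_sqrt (Finset.sum_nonneg fun i _ => sq_nonneg _)
  have hTb : Real.sqrt (∑ p, ‖T p‖ ^ 2) ≤ b := by
    rw [hT2, hb_def]
    apply Real.sqrt_le_sqrt
    calc ∑ l, ‖γ l‖ ^ 2
        ≤ ∑ l, ∑ i, ‖v (Sum.inr (Sum.inr (i, l)))‖ ^ 2 :=
          Finset.sum_le_sum fun l _ => hγb l
      _ ≤ ∑ p, ‖v p‖ ^ 2 := by
          have e : (∑ l : Fin m, ∑ i : Fin z, ‖v (Sum.inr (Sum.inr (i, l)))‖ ^ 2)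
              = ∑ q : Fin z × Fin m, ‖v (Sum.inr (Sum.inr q))‖ ^ 2 := by
            rw [Fintype.sum_prod_type_right]
          rw [e, Fintype.sum_sum_type, Fintype.sum_sum_type]
          have h1 : (0:ℝ) ≤ ∑ i, ‖v (Sum.inl i)‖ ^ 2 :=
            Finset.sum_nonneg fun i _ => sq_nonneg _
          have h2 : (0:ℝ) ≤ ∑ p : Fin z × Fin m, ‖v (Sum.inr (Sum.inl p))‖ ^ 2 :=
            Finset.sum_nonneg fun p _ => sq_nonneg _
          linarith
  -- pass to Euclidean norms
  have key : ∀ f : Zext z m → ℂ,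
      Real.sqrt (∑ p, ‖f p‖ ^ 2) = ‖(WithLp.equiv 2 (Zext z m → ℂ)).symm f‖ := by
    intro f; rw [EuclideanSpace.norm_eq]; rfl
  set uE : EuclideanSpace ℂ (Zext z m) := (WithLp.equiv 2 (Zext z m → ℂ)).symm u with huE
  set sE : EuclideanSpace ℂ (Zext z m) := (WithLp.equiv 2 (Zext z m → ℂ)).symm s with hsE
  set TE : EuclideanSpace ℂ (Zext z m) := (WithLp.equiv 2 (Zext z m → ℂ)).symm T with hTE
  have hδn : ‖(δ:ℂ)‖ = δ := by
    rw [Complex.norm_real, Real.norm_eq_abs, abs_of_nonneg hδ0]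
  have hccn : ‖cc‖ = (m:ℝ)⁻¹ * (1 + 2 * δ ^ 2)⁻¹ := by
    rw [hcc_def, norm_mul, norm_inv, norm_inv]
    congr 1
    · rw [Complex.norm_natCast]
    · have hcast : ((1:ℂ) + 2 * (δ:ℂ) ^ 2) = ((1 + 2 * δ ^ 2 : ℝ) : ℂ) := by push_cast; ring
      rw [hcast, Complex.norm_real, Real.norm_eq_abs, abs_of_nonneg (by positivity)]
  have keynorm : Real.sqrt (∑ p, ‖N.mulVec v p‖ ^ 2)
      ≤ ‖cc‖ * (δ * (‖α‖ * Real.sqrt (1 + δ ^ 2)) + δ * (‖β‖ * Real.sqrt m)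
          + δ ^ 2 * Real.sqrt (∑ p, ‖T p‖ ^ 2)) := by
    rw [hmulvec, key]
    have hcast : (WithLp.equiv 2 (Zext z m → ℂ)).symm
          (cc • ((δ:ℂ) • (α • u) + (δ:ℂ) • (β • s) + ((δ:ℂ) ^ 2) • T))
        = cc • ((δ:ℂ) • (α • uE) + (δ:ℂ) • (β • sE) + ((δ:ℂ) ^ 2) • TE) := by
      simp only [WithLp.equiv_symm_apply, WithLp.toLp_add, WithLp.toLp_smul, huE, hsE, hTE]
    rw [hcast, norm_smul]
    have htri : ‖(δ:ℂ) • (α • uE) + (δ:ℂ) • (β • sE) + ((δ:ℂ) ^ 2) • TE‖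
        ≤ δ * (‖α‖ * Real.sqrt (1 + δ ^ 2)) + δ * (‖β‖ * Real.sqrt m)
          + δ ^ 2 * Real.sqrt (∑ p, ‖T p‖ ^ 2) := by
      have hu' : ‖uE‖ = Real.sqrt (1 + δ ^ 2) := by rw [huE, ← key, hU2]
      have hs' : ‖sE‖ = Real.sqrt m := by rw [hsE, ← key, hS2]
      have ht' : ‖TE‖ = Real.sqrt (∑ p, ‖T p‖ ^ 2) := by rw [hTE, ← key]
      calc ‖(δ:ℂ) • (α • uE) + (δ:ℂ) • (β • sE) + ((δ:ℂ) ^ 2) • TE‖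
          ≤ ‖(δ:ℂ) • (α • uE)‖ + ‖(δ:ℂ) • (β • sE)‖ + ‖((δ:ℂ) ^ 2) • TE‖ :=
            norm_add₃_le
        _ = δ * (‖α‖ * ‖uE‖) + δ * (‖β‖ * ‖sE‖) + δ ^ 2 * ‖TE‖ := by
            rw [norm_smul, norm_smul, norm_smul, norm_smul, norm_smul, hδn, norm_pow, hδn]
        _ = _ := by rw [hu', hs', ht']
    exact mul_le_mul_of_nonneg_left htri (norm_nonneg _)
  -- numeric facts
  have hq0 : (0:ℝ) ≤ Real.sqrt (1 + δ ^ 2) := Real.sqrt_nonneg _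
  have hq : Real.sqrt (1 + δ ^ 2) ≤ 1 + 2 * δ ^ 2 := by
    rw [show (1 + 2 * δ ^ 2 : ℝ) = Real.sqrt ((1 + 2 * δ ^ 2) ^ 2) from
      (Real.sqrt_sq (by positivity)).symm]
    apply Real.sqrt_le_sqrt
    nlinarith [sq_nonneg δ, sq_nonneg (δ ^ 2)]
  have hr1 : (1:ℝ) ≤ Real.sqrt m := by
    rw [show (1:ℝ) = Real.sqrt 1 from Real.sqrt_one.symm]
    exact Real.sqrt_le_sqrt hm1
  have hr0 : (0:ℝ) < Real.sqrt m := lt_of_lt_of_le one_pos hr1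
  have hmr : (m:ℝ) = Real.sqrt m ^ 2 := (Real.sq_sqrt (by positivity)).symm
  -- combine
  refine le_trans keynorm ?_
  rw [hccn]
  calc ((m:ℝ))⁻¹ * (1 + 2 * δ ^ 2)⁻¹ * (δ * (‖α‖ * Real.sqrt (1 + δ ^ 2))
        + δ * (‖β‖ * Real.sqrt m) + δ ^ 2 * Real.sqrt (∑ p, ‖T p‖ ^ 2))
      ≤ ((m:ℝ))⁻¹ * (1 + 2 * δ ^ 2)⁻¹ * (δ * ((Real.sqrt m * b) * Real.sqrt (1 + δ ^ 2))
        + δ * ((Real.sqrt (1 + δ ^ 2) * b) * Real.sqrt m) + δ ^ 2 * b) := by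
        have hpos : (0:ℝ) ≤ ((m:ℝ))⁻¹ * (1 + 2 * δ ^ 2)⁻¹ := by positivity
        apply mul_le_mul_of_nonneg_left _ hpos
        have t1 : δ * (‖α‖ * Real.sqrt (1 + δ ^ 2))
            ≤ δ * ((Real.sqrt m * b) * Real.sqrt (1 + δ ^ 2)) :=
          mul_le_mul_of_nonneg_left (mul_le_mul_of_nonneg_right hαb hq0) hδ0
        have t2 : δ * (‖β‖ * Real.sqrt m)
            ≤ δ * ((Real.sqrt (1 + δ ^ 2) * b) * Real.sqrt m) :=
          mul_le_mul_of_nonneg_left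
            (mul_le_mul_of_nonneg_right hβb (Real.sqrt_nonneg _)) hδ0
        have t3 : δ ^ 2 * Real.sqrt (∑ p, ‖T p‖ ^ 2) ≤ δ ^ 2 * b :=
          mul_le_mul_of_nonneg_left hTb (sq_nonneg δ)
        exact add_le_add (add_le_add t1 t2) t3
    _ ≤ 3 * δ / Real.sqrt m * b := by
        set r := Real.sqrt m with hr_def
        set q := Real.sqrt (1 + δ ^ 2) with hq_def
        have hrpos : (0:ℝ) < r := hr0
        have hne2 : (1 + 2 * δ ^ 2 : ℝ) ≠ 0 := by positivity
        rw [div_mul_eq_mul_div, le_div_iff₀ hrpos, hmr]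
        have expand : ((r:ℝ) ^ 2)⁻¹ * (1 + 2 * δ ^ 2)⁻¹
              * (δ * ((r * b) * q) + δ * ((q * b) * r) + δ ^ 2 * b) * r
            = (2 * δ * q * b * r ^ 2 + δ ^ 2 * b * r) / (r ^ 2 * (1 + 2 * δ ^ 2)) := by
          field_simp
          ring
        rw [expand, div_le_iff₀ (by positivity)]
        have hA : (0:ℝ) ≤ δ * b * (r * r) :=
          mul_nonneg (mul_nonneg hδ0 hb0) (mul_nonneg hrpos.le hrpos.le)
        have h1 : δ * b * (r * r) * q ≤ δ * b * (r * r) * (1 + 2 * δ ^ 2) :=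
          mul_le_mul_of_nonneg_left hq hA
        have hB : (0:ℝ) ≤ δ * b * r := mul_nonneg (mul_nonneg hδ0 hb0) hrpos.le
        have h2 : δ * (δ * b * r) ≤ 1 * (δ * b * r) := mul_le_mul_of_nonneg_right hδ1 hB
        have h3 : δ * b * r * 1 ≤ δ * b * r * r := mul_le_mul_of_nonneg_left hr1 hB
        have h4 : (0:ℝ) ≤ δ * b * (r * r) * (2 * δ ^ 2) := mul_nonneg hA (by positivity)
        nlinarith [h1, h2, h3, h4]
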